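/- (Lower bound on the cross term.) Let f_1, …, f_n : ℝ^d → ℝ be convex and L-smooth, let f = (1/n)∑_{i=1}^n f_i, and let x* be a global minimizer of f. Then for any γ > 0 and any points x_1, …, x_n ∈ ℝ^d with average x̄ = (1/n)∑_i x_i, (2γ/n)·∑_{i=1}^n ⟨x̄ − x*, ∇f_i(x_i)⟩ ≥ 2γ·(f(x̄) − f(x*)) − (γ·L/n)·∑_{i=1}^n ‖x̄ − x_i‖². -/

import Mathlib

open Finset
open scoped RealInnerProductSpace

section Aux

variable {E : Type*} [NormedAddCommGroup E] [InnerProductSpace ℝ E] [CompleteSpace E]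

lemma line_hasDerivAt {f : E → ℝ} {g x y : E} (t : ℝ)
    (h : HasGradientAt f g (AffineMap.lineMap x y t)) :
    HasDerivAt (fun s : ℝ => f (AffineMap.lineMap x y s)) ⟪g, y - x⟫ t := by
  have h1 : HasDerivAt (AffineMap.lineMap x y : ℝ → E) (y - x) t :=
    AffineMap.hasDerivAt_lineMap
  have h2 := h.hasFDerivAt.comp_hasDerivAt t h1
  simpa [Function.comp_def] using h2

/-- First-order characterization of convexity. -/
lemma convex_grad_ineq {f : E → ℝ} {g : E → E}
    (hdiff : ∀ z, HasGradientAt f (g z) z)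
    (hconv : ConvexOn ℝ Set.univ f) (x y : E) :
    ⟪g x, y - x⟫ ≤ f y - f x := by
  have cvx : ConvexOn ℝ Set.univ (fun t : ℝ => f (AffineMap.lineMap x y t)) := by
    have := hconv.comp_affineMap (AffineMap.lineMap x y)
    simpa [Set.preimage_univ, Function.comp_def] using this
  have hx0 : (AffineMap.lineMap x y : ℝ → E) 0 = x := by simp
  have hd : HasDerivAt (fun s : ℝ => f (AffineMap.lineMap x y s)) ⟪g x, y - x⟫ 0 :=
    line_hasDerivAt (f := f) (g := g x) (x := x) (y := y) 0 (by rw [hx0]; exact hdiff x)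
  have := cvx.le_slope_of_hasDerivAt (Set.mem_univ (0 : ℝ)) (Set.mem_univ (1 : ℝ))
    one_pos hd
  simpa [slope_def_field] using this

/-- Descent lemma for functions with Lipschitz gradient. -/
lemma descent_lemma {f : E → ℝ} {g : E → E} {L : ℝ} (hL : 0 ≤ L)
    (hdiff : ∀ z, HasGradientAt f (g z) z)
    (hlip : ∀ y z, ‖g y - g z‖ ≤ L * ‖y - z‖) (x y : E) :
    f y ≤ f x + ⟪g x, y - x⟫ + L / 2 * ‖y - x‖ ^ 2 := by
  set C : ℝ := ⟪g x, y - x⟫ with hC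
  set N : ℝ := ‖y - x‖ ^ 2 with hN
  set φ : ℝ → ℝ := fun t => f (AffineMap.lineMap x y t) - (t * C + L * N / 2 * t ^ 2) with hφ
  have hφd : ∀ t : ℝ, HasDerivAt φ
      (⟪g (AffineMap.lineMap x y t), y - x⟫ - (C + L * N * t)) t := by
    intro t
    have h1 := line_hasDerivAt (f := f) (x := x) (y := y) t
      (hdiff (AffineMap.lineMap x y t))
    have h2 : HasDerivAt (fun s : ℝ => s * C) C t := by
      simpa using (hasDerivAt_id t).mul_const C
    have h3 : HasDerivAt (fun s : ℝ => L * N / 2 * s ^ 2) (L * N * t) t := by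
      have := (hasDerivAt_pow 2 t).const_mul (L * N / 2)
      exact this.congr_deriv (by ring)
    simpa [hφ, add_comm, Pi.sub_def, Pi.add_def] using h1.sub (h2.add h3)
  have hanti : AntitoneOn φ (Set.Icc (0 : ℝ) 1) := by
    apply antitoneOn_of_deriv_nonpos (convex_Icc 0 1)
    · exact Continuous.continuousOn (by
        have : Continuous φ := by
          have : Differentiable ℝ φ := fun t => (hφd t).differentiableAt
          exact this.continuous
        exact this)
    · intro t ht
      exact (hφd t).differentiableAt.differentiableWithinAt
    · intro t ht
      rw [interior_Icc] at ht
      rw [(hφd t).deriv]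
      have hz : AffineMap.lineMap x y t - x = t • (y - x) := by
        simp [AffineMap.lineMap_apply]
      have hb : ⟪g (AffineMap.lineMap x y t) - g x, y - x⟫ ≤ L * N * t := by
        calc ⟪g (AffineMap.lineMap x y t) - g x, y - x⟫
            ≤ ‖g (AffineMap.lineMap x y t) - g x‖ * ‖y - x‖ := real_inner_le_norm _ _
          _ ≤ (L * ‖AffineMap.lineMap x y t - x‖) * ‖y - x‖ := by
              have := hlip (AffineMap.lineMap x y t) x
              exact mul_le_mul_of_nonneg_right this (norm_nonneg _)
          _ = L * N * t := by
              rw [hz, norm_smul]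
              simp [hN, abs_of_pos ht.1]
              ring
      have hsplit : ⟪g (AffineMap.lineMap x y t), y - x⟫ - C =
          ⟪g (AffineMap.lineMap x y t) - g x, y - x⟫ := by
        rw [inner_sub_left, hC]
      linarith [hb, hsplit]
  have h01 := hanti (Set.mem_Icc.mpr ⟨le_refl 0, zero_le_one⟩)
    (Set.mem_Icc.mpr ⟨zero_le_one, le_refl 1⟩) zero_le_one
  have h0 : φ 0 = f x := by simp [hφ]
  have h1 : φ 1 = f y - (C + L * N / 2) := by
    simp [hφ]
  rw [h0, h1] at h01
  simp only [hC, hN] at h01 ⊢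
  linarith

end Aux

/-- **Lower bound on the cross term.**
Let `f₁, …, fₙ : ℝ^d → ℝ` be convex and `L`-smooth, `f = (1/n) ∑ fᵢ`, and `x*` a global
minimizer of `f`.  Then for any `γ > 0` and points `x₁, …, xₙ` with average `x̄`,
`(2γ/n) ∑ᵢ ⟨x̄ − x*, ∇fᵢ(xᵢ)⟩ ≥ 2γ (f(x̄) − f(x*)) − (γL/n) ∑ᵢ ‖x̄ − xᵢ‖²`. -/
theorem cross_term_lower_bound
    (d n : ℕ) (hn : 0 < n)
    (f : Fin n → EuclideanSpace ℝ (Fin d) → ℝ)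
    (grad : Fin n → EuclideanSpace ℝ (Fin d) → EuclideanSpace ℝ (Fin d))
    (L : ℝ) (hL : 0 < L)
    (hdiff : ∀ i z, HasGradientAt (f i) (grad i z) z)
    (hconv : ∀ i, ConvexOn ℝ Set.univ (f i))
    (hsmooth : ∀ i y z, ‖grad i y - grad i z‖ ≤ L * ‖y - z‖)
    (xstar : EuclideanSpace ℝ (Fin d))
    (hmin : ∀ z, (n : ℝ)⁻¹ * ∑ i, f i xstar ≤ (n : ℝ)⁻¹ * ∑ i, f i z)
    (γ : ℝ) (hγ : 0 < γ)
    (x : Fin n → EuclideanSpace ℝ (Fin d)) :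
    2 * γ / n * ∑ i, ⟪(n : ℝ)⁻¹ • (∑ j, x j) - xstar, grad i (x i)⟫ ≥
      2 * γ * ((n : ℝ)⁻¹ * ∑ i, f i ((n : ℝ)⁻¹ • ∑ j, x j)
          - (n : ℝ)⁻¹ * ∑ i, f i xstar)
      - γ * L / n * ∑ i, ‖(n : ℝ)⁻¹ • (∑ j, x j) - x i‖ ^ 2 := by
  set xbar : EuclideanSpace ℝ (Fin d) := (n : ℝ)⁻¹ • (∑ j, x j) with hxbar
  have hnpos : (0 : ℝ) < n := by exact_mod_cast hn
  have key : ∀ i, f i xbar - f i xstar - L / 2 * ‖xbar - x i‖ ^ 2 ≤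
      ⟪xbar - xstar, grad i (x i)⟫ := by
    intro i
    have hA : ⟪grad i (x i), xstar - x i⟫ ≤ f i xstar - f i (x i) :=
      convex_grad_ineq (hdiff i) (hconv i) (x i) xstar
    have hB : f i xbar ≤ f i (x i) + ⟪grad i (x i), xbar - x i⟫
        + L / 2 * ‖xbar - x i‖ ^ 2 :=
      descent_lemma hL.le (hdiff i) (hsmooth i) (x i) xbar
    have hsplit : ⟪xbar - xstar, grad i (x i)⟫ =
        ⟪grad i (x i), xbar - x i⟫ - ⟪grad i (x i), xstar - x i⟫ := by
      rw [real_inner_comm, ← inner_sub_right]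
      congr 1
      abel
    linarith
  have hsum : ∑ i, (f i xbar - f i xstar - L / 2 * ‖xbar - x i‖ ^ 2) ≤
      ∑ i, ⟪xbar - xstar, grad i (x i)⟫ :=
    Finset.sum_le_sum fun i _ => key i
  have hsum' : ∑ i, (f i xbar - f i xstar - L / 2 * ‖xbar - x i‖ ^ 2) =
      ∑ i, f i xbar - ∑ i, f i xstar - L / 2 * ∑ i, ‖xbar - x i‖ ^ 2 := by
    rw [Finset.mul_sum, ← Finset.sum_sub_distrib, ← Finset.sum_sub_distrib]
  rw [hsum'] at hsum
  rw [ge_iff_le]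
  calc 2 * γ * ((n : ℝ)⁻¹ * ∑ i, f i xbar - (n : ℝ)⁻¹ * ∑ i, f i xstar)
        - γ * L / n * ∑ i, ‖xbar - x i‖ ^ 2
      = 2 * γ / n * (∑ i, f i xbar - ∑ i, f i xstar
          - L / 2 * ∑ i, ‖xbar - x i‖ ^ 2) := by
        field_simp
    _ ≤ 2 * γ / n * ∑ i, ⟪xbar - xstar, grad i (x i)⟫ := by
        apply mul_le_mul_of_nonneg_left hsum
        positivity
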